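/- arXiv:2205.08914 — 3 statements merged into one kernel-verified Lean document; each statement's English description precedes it below -/
import Mathlib

section
/- Let M = N ×_f N_T be a warped product submanifold of an almost contact metric manifold with ξ tangent to the first factor N. Then for every X tangent to N and Z, W tangent to N_T: g(𝒫_X Z, W) = 0, where 𝒫_X Y denotes the tangential component of (∇̃_X φ)Y. -/
/-- Abstract model of an isometrically immersed (doubly/singly) warped product
submanifold `M = N₁ ×_f N₂` of an almost contact metric manifold
`(M̃, φ, ξ, η, g̃)`, at the level of vector fields along `M`.  `F` plays the
role of the ring of smooth functions, `V` the module of ambient vector fields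
along `M`; `act X a` is the derivative `X(a)`; `nab` is the ambient Levi-Civita
connection `∇̃`, `nabM` the induced connection `∇` on `M` and `h` the second
fundamental form (Gauss formula `∇̃_X Y = ∇_X Y + h(X,Y)`); `Tang` is the
space of vector fields tangent to `M`, `D1`, `D2` those tangent to the factors
`N₁`, `N₂`; `P X`/`Fn X` are the tangential/normal parts of `φX` for `X`
tangent to `M`, and `Pc U W`/`Qc U W` the tangential/normal parts
`𝒫_U W`/`𝒬_U W` of `(∇̃_U φ) W = ∇̃_U (φW) − φ (∇̃_U W)`.  `η` is given by
`η(X) = g̃(X, ξ)`. -/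
structure ContactWarpedSetting (F : Type*) (V : Type*) [CommRing F]
    [AddCommGroup V] [Module F V] where
  g : V →ₗ[F] V →ₗ[F] F
  g_symm : ∀ X Y, g X Y = g Y X
  act : V → F → F
  act_add : ∀ X a b, act X (a + b) = act X a + act X b
  act_mul : ∀ X a b, act X (a * b) = a * act X b + b * act X a
  nab : V → V → V
  nab_metric : ∀ X Y Z, act X (g Y Z) = g (nab X Y) Z + g Y (nab X Z)
  phi : V →ₗ[F] V
  xi : V
  phi_phi : ∀ X, phi (phi X) = -X + (g X xi) • xi
  phi_xi : phi xi = 0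
  g_xixi : g xi xi = 1
  phi_compat : ∀ X Y, g (phi X) (phi Y) = g X Y - (g X xi) * (g Y xi)
  Tang : Submodule F V
  D1 : Submodule F V
  D2 : Submodule F V
  D1_le : D1 ≤ Tang
  D2_le : D2 ≤ Tang
  ortho : ∀ X ∈ D1, ∀ Z ∈ D2, g X Z = 0
  nabM : V → V → V
  nabM_tang : ∀ X Y, nabM X Y ∈ Tang
  h : V → V → V
  h_symm : ∀ X Y, h X Y = h Y X
  h_normal : ∀ X Y, ∀ T ∈ Tang, g (h X Y) T = 0
  gauss : ∀ X ∈ Tang, ∀ Y ∈ Tang, nab X Y = nabM X Y + h X Y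
  P : V → V
  Fn : V → V
  phi_decomp : ∀ X ∈ Tang, phi X = P X + Fn X
  P_tang : ∀ X, P X ∈ Tang
  Fn_normal : ∀ X, ∀ T ∈ Tang, g (Fn X) T = 0
  Pc : V → V → V
  Qc : V → V → V
  Pc_tang : ∀ U W, Pc U W ∈ Tang
  Qc_normal : ∀ U W, ∀ T ∈ Tang, g (Qc U W) T = 0
  cov_decomp : ∀ U ∈ Tang, ∀ W ∈ Tang,
    nab U (phi W) - phi (nab U W) = Pc U W + Qc U W

theorem jop_i {F V : Type*} [CommRing F] [AddCommGroup V] [Module F V]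
    (S : ContactWarpedSetting F V)
    (hxi : S.xi ∈ S.D1)
    (dlf : V → F)
    (warp : ∀ X ∈ S.D1, ∀ Z ∈ S.D2, S.nabM X Z = dlf X • Z)
    (warp' : ∀ X ∈ S.D1, ∀ Z ∈ S.D2, S.nabM Z X = dlf X • Z)
    (inv2 : ∀ Z ∈ S.D2, S.phi Z ∈ S.D2) :
    ∀ X ∈ S.D1, ∀ Z ∈ S.D2, ∀ W ∈ S.D2, S.g (S.Pc X Z) W = 0 := by
  -- η ∘ φ = 0
  have eta_phi : ∀ Y, S.g (S.phi Y) S.xi = 0 := by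
    intro Y
    have h1 : S.phi (S.phi (S.phi Y)) = - S.phi Y := by
      rw [S.phi_phi Y, map_add, map_neg, map_smul, S.phi_xi, smul_zero, add_zero]
    have h2 : S.phi (S.phi (S.phi Y)) = - S.phi Y + (S.g (S.phi Y) S.xi) • S.xi :=
      S.phi_phi (S.phi Y)
    have h3 : (S.g (S.phi Y) S.xi) • S.xi = 0 :=
      left_eq_add.mp (h1.symm.trans h2)
    have := congrArg (fun v => S.g v S.xi) h3
    simpa [S.g_xixi] using this
  -- skew-symmetry of φ
  have skew : ∀ X Y, S.g (S.phi X) Y = - S.g X (S.phi Y) := by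
    intro X Y
    have h1 := S.phi_compat X (S.phi Y)
    rw [S.phi_phi Y, eta_phi Y] at h1
    simp only [map_add, map_neg, map_smul, smul_eq_mul] at h1
    rw [show (S.g (S.phi X)) S.xi = 0 from eta_phi X] at h1
    linear_combination -h1
  intro X hX Z hZ W hW
  have hXT : X ∈ S.Tang := S.D1_le hX
  have hZT : Z ∈ S.Tang := S.D2_le hZ
  have hWT : W ∈ S.Tang := S.D2_le hW
  have hpZ : S.phi Z ∈ S.D2 := inv2 Z hZ
  have hpZT : S.phi Z ∈ S.Tang := S.D2_le hpZ
  have hpW : S.phi W ∈ S.D2 := inv2 W hW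
  have hpWT : S.phi W ∈ S.Tang := S.D2_le hpW
  -- decomposition
  have hdec := S.cov_decomp X hXT Z hZT
  have key : S.g (S.Pc X Z) W
      = S.g (S.nab X (S.phi Z)) W - S.g (S.phi (S.nab X Z)) W - S.g (S.Qc X Z) W := by
    have := congrArg (fun v => S.g v W) hdec
    simp only [map_sub, map_add, LinearMap.sub_apply, LinearMap.add_apply] at this
    linear_combination -this
  rw [key, S.Qc_normal X Z W hWT]
  -- first term
  have t1 : S.g (S.nab X (S.phi Z)) W = dlf X * S.g (S.phi Z) W := by
    rw [S.gauss X hXT (S.phi Z) hpZT, warp X hX (S.phi Z) hpZ]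
    simp only [map_add, map_smul, LinearMap.add_apply, LinearMap.smul_apply, smul_eq_mul]
    rw [S.h_normal X (S.phi Z) W hWT, add_zero]
  -- second term
  have t2 : S.g (S.phi (S.nab X Z)) W = dlf X * S.g (S.phi Z) W := by
    rw [S.gauss X hXT Z hZT, warp X hX Z hZ]
    have hh : S.g (S.phi (S.h X Z)) W = 0 := by
      rw [skew]
      have : S.g (S.h X Z) (S.phi W) = 0 := S.h_normal X Z (S.phi W) hpWT
      rw [this, neg_zero]
    simp only [map_add, map_smul, LinearMap.add_apply, LinearMap.smul_apply, smul_eq_mul]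
    rw [hh, add_zero]
  rw [t1, t2]
  ring
end

section
/- Let M = N_T ×_f N be a warped product submanifold of an almost contact metric manifold with ξ tangent to the invariant first factor N_T. Then g(𝒫_Z X, Y) = 0 for all X, Y tangent to N_T and Z tangent to N. -/
theorem T1_iii {F V : Type*} [CommRing F] [AddCommGroup V] [Module F V]
    (S : ContactWarpedSetting F V)
    (hxi : S.xi ∈ S.D1)
    (dlf : V → F)
    (warp : ∀ X ∈ S.D1, ∀ Z ∈ S.D2, S.nabM X Z = dlf X • Z)
    (warp' : ∀ X ∈ S.D1, ∀ Z ∈ S.D2, S.nabM Z X = dlf X • Z)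
    (inv1 : ∀ X ∈ S.D1, S.phi X ∈ S.D1) :
    ∀ X ∈ S.D1, ∀ Y ∈ S.D1, ∀ Z ∈ S.D2, S.g (S.Pc Z X) Y = 0 := by
  -- Step 1: η ∘ φ = 0, i.e. g(φX, ξ) = 0 for all X.
  have azero : ∀ X : V, S.g (S.phi X) S.xi = 0 := by
    intro X
    have e2 : S.phi (S.phi (S.phi X)) = - S.phi X := by
      have h := congrArg S.phi (S.phi_phi X)
      simpa [map_add, map_neg, map_smul, S.phi_xi] using h
    have e1 := S.phi_phi (S.phi X)
    rw [e2] at e1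
    -- e1 : -φX = -φX + g(φX,ξ) • ξ
    have e3 : (S.g (S.phi X) S.xi) • S.xi = 0 := left_eq_add.mp e1
    have e4 : S.g ((S.g (S.phi X) S.xi) • S.xi) S.xi = 0 := by rw [e3]; simp
    simpa [map_smul, LinearMap.smul_apply, smul_eq_mul, S.g_xixi] using e4
  -- Step 2: skew-symmetry of φ with respect to g.
  have skew : ∀ X Y : V, S.g (S.phi X) Y = - S.g X (S.phi Y) := by
    intro X Y
    have c := S.phi_compat (S.phi X) Y
    rw [S.phi_phi X, azero X] at c
    have hx : S.g S.xi (S.phi Y) = 0 := by rw [S.g_symm]; exact azero Y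
    simp only [map_add, map_neg, map_smul, LinearMap.add_apply, LinearMap.neg_apply,
      LinearMap.smul_apply, hx, smul_eq_mul, mul_zero, add_zero, zero_mul, sub_zero] at c
    linear_combination -c
  -- Step 3: the main computation.
  intro X hX Y hY Z hZ
  have hXT : X ∈ S.Tang := S.D1_le hX
  have hYT : Y ∈ S.Tang := S.D1_le hY
  have hZT : Z ∈ S.Tang := S.D2_le hZ
  have hpX : S.phi X ∈ S.D1 := inv1 X hX
  have hpXT : S.phi X ∈ S.Tang := S.D1_le hpX
  have hpY : S.phi Y ∈ S.D1 := inv1 Y hY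
  have hpYT : S.phi Y ∈ S.Tang := S.D1_le hpY
  have cd := S.cov_decomp Z hZT X hXT
  have hPc : S.Pc Z X = (S.nab Z (S.phi X) - S.phi (S.nab Z X)) - S.Qc Z X :=
    eq_sub_of_add_eq cd.symm
  -- g(∇̃_Z φX, Y) = 0
  have g1 : S.g (S.nab Z (S.phi X)) Y = 0 := by
    rw [S.gauss Z hZT (S.phi X) hpXT, warp' (S.phi X) hpX Z hZ]
    have h1 : S.g Z Y = 0 := by rw [S.g_symm]; exact S.ortho Y hY Z hZ
    have h2 : S.g (S.h Z (S.phi X)) Y = 0 := S.h_normal _ _ Y hYT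
    simp [map_add, map_smul, LinearMap.add_apply, LinearMap.smul_apply, smul_eq_mul, h1, h2]
  -- g(φ ∇̃_Z X, Y) = 0
  have g2 : S.g (S.phi (S.nab Z X)) Y = 0 := by
    rw [skew, S.gauss Z hZT X hXT, warp' X hX Z hZ]
    have h1 : S.g Z (S.phi Y) = 0 := by rw [S.g_symm]; exact S.ortho _ hpY Z hZ
    have h2 : S.g (S.h Z X) (S.phi Y) = 0 := S.h_normal _ _ _ hpYT
    simp [map_add, map_smul, LinearMap.add_apply, LinearMap.smul_apply, smul_eq_mul, h1, h2]
  -- g(𝒬_Z X, Y) = 0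
  have g3 : S.g (S.Qc Z X) Y = 0 := S.Qc_normal Z X Y hYT
  rw [hPc]
  simp [map_sub, LinearMap.sub_apply, g1, g2, g3]
end

section
/- Let M = N_T ×_f N be a warped product submanifold of a nearly trans-Sasakian manifold with ξ tangent to the invariant first factor N_T. Then for every X tangent to N_T and every normal vector ζ in the invariant normal subbundle ν: g(h(X,X), ζ) + g(h(φX, φX), ζ) = 0. -/
theorem X1_2 {F V : Type*} [CommRing F] [AddCommGroup V] [Module F V]
    (S : ContactWarpedSetting F V)
    (hxi : S.xi ∈ S.D1)
    (dlf : V → F)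
    (warp : ∀ X ∈ S.D1, ∀ Z ∈ S.D2, S.nabM X Z = dlf X • Z)
    (warp' : ∀ X ∈ S.D1, ∀ Z ∈ S.D2, S.nabM Z X = dlf X • Z)
    (inv1 : ∀ X ∈ S.D1, S.phi X ∈ S.D1)
    (α β : F)
    (nearlyTransSasakian : ∀ U W,
      (S.nab U (S.phi W) - S.phi (S.nab U W)) + (S.nab W (S.phi U) - S.phi (S.nab W U)) =
        α • ((2 * S.g U W) • S.xi - (S.g W S.xi) • U - (S.g U S.xi) • W) -
          β • ((S.g W S.xi) • S.phi U + (S.g U S.xi) • S.phi W))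
    (ν : Submodule F V)
    (nu_normal : ∀ ζ ∈ ν, ∀ T ∈ S.Tang, S.g ζ T = 0)
    (nu_inv : ∀ ζ ∈ ν, S.phi ζ ∈ ν)
    (h_xi : ∀ X ∈ S.D1, S.h X S.xi = 0) :
    ∀ X ∈ S.D1, ∀ ζ ∈ ν, S.g (S.h X X) ζ + S.g (S.h (S.phi X) (S.phi X)) ζ = 0 := by
  intro X hX ζ hζ
  have hXT : X ∈ S.Tang := S.D1_le hX
  have hpX1 : S.phi X ∈ S.D1 := inv1 X hX
  have hpXT : S.phi X ∈ S.Tang := S.D1_le hpX1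
  have hxiT : S.xi ∈ S.Tang := S.D1_le hxi
  have hpζ : S.phi ζ ∈ ν := nu_inv ζ hζ
  have act0 : ∀ U : V, S.act U 0 = 0 := by
    intro U
    have h := S.act_add U 0 0
    rw [add_zero] at h
    linear_combination -h
  have gz : ∀ T ∈ S.Tang, ∀ w ∈ ν, S.g T w = 0 := by
    intro T hT w hw
    rw [S.g_symm]
    exact nu_normal w hw T hT
  have eta_phi : ∀ A : V, S.g (S.phi A) S.xi = 0 := by
    intro A
    have h1 := S.phi_phi (S.phi A)
    have h2 : S.phi (S.phi (S.phi A)) = -(S.phi A) := by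
      rw [S.phi_phi A, map_add, map_neg, map_smul, S.phi_xi, smul_zero, add_zero]
    have h3 : (S.g (S.phi A) S.xi) • S.xi = (0 : V) :=
      left_eq_add.mp (h2.symm.trans h1)
    have h5 := congrArg (fun v => S.g v S.xi) h3
    simpa [S.g_xixi] using h5
  have skew : ∀ A B : V, S.g (S.phi A) B = - S.g A (S.phi B) := by
    intro A B
    have h1 := S.phi_compat A (S.phi B)
    rw [S.phi_phi B, map_add, map_neg, map_smul, smul_eq_mul, eta_phi A, eta_phi B] at h1
    linear_combination -h1
  have L2 : ∀ (U : V), ∀ Y ∈ S.Tang, ∀ w ∈ ν, S.g (S.nab U Y) w = - S.g Y (S.nab U w) := by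
    intro U Y hY w hw
    have hm := S.nab_metric U Y w
    rw [gz Y hY w hw, act0] at hm
    linear_combination -hm
  have L3 : ∀ U ∈ S.Tang, ∀ Y ∈ S.Tang, ∀ w ∈ ν, S.g (S.h U Y) w = S.g (S.nab U Y) w := by
    intro U hU Y hY w hw
    have hg := congrArg (fun v => S.g v w) (S.gauss U hU Y hY)
    simp only [map_add, LinearMap.add_apply] at hg
    rw [gz _ (S.nabM_tang U Y) w hw] at hg
    linear_combination -hg
  have L4 : ∀ U ∈ S.D1, ∀ w ∈ ν, S.g S.xi (S.nab U w) = 0 := by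
    intro U hU w hw
    have hm := S.nab_metric U w S.xi
    rw [nu_normal w hw S.xi hxiT, act0] at hm
    have hg : S.nab U S.xi = S.nabM U S.xi := by
      rw [S.gauss U (S.D1_le hU) S.xi hxiT, h_xi U hU, add_zero]
    rw [hg, S.g_symm w (S.nabM U S.xi), gz _ (S.nabM_tang U S.xi) w hw] at hm
    rw [S.g_symm]
    linear_combination -hm
  have hφφT : S.phi (S.phi X) ∈ S.Tang := by
    rw [S.phi_phi X]
    exact add_mem (neg_mem hXT) (Submodule.smul_mem _ _ hxiT)
  -- key term identities
  have t0 : S.g (S.phi (S.nab X X)) (S.phi ζ) = S.g (S.nab X X) ζ := by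
    rw [skew, S.phi_phi ζ, map_add, map_neg, map_smul, smul_eq_mul, nu_normal ζ hζ S.xi hxiT]
    ring
  have t1 : S.g (S.nab X (S.phi (S.phi X))) ζ = - S.g (S.nab X X) ζ := by
    rw [L2 X _ hφφT ζ hζ, S.phi_phi X]
    simp only [map_add, map_neg, map_smul, LinearMap.add_apply, LinearMap.neg_apply,
      LinearMap.smul_apply, smul_eq_mul]
    rw [L4 X hX ζ hζ]
    have hL := L2 X X hXT ζ hζ
    linear_combination hL
  have t2 : S.g (S.phi (S.nab X (S.phi X))) ζ = - S.g (S.nab X (S.phi X)) (S.phi ζ) :=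
    skew _ _
  have t4 : S.g (S.phi (S.nab (S.phi X) X)) ζ = - S.g (S.nab X (S.phi X)) (S.phi ζ) := by
    rw [skew]
    rw [← L3 (S.phi X) hpXT X hXT (S.phi ζ) hpζ, S.h_symm,
      L3 X hXT (S.phi X) hpXT (S.phi ζ) hpζ]
  have e1 := nearlyTransSasakian X X
  have e2 := nearlyTransSasakian X (S.phi X)
  have q1 := congrArg (fun v => S.g v (S.phi ζ)) e1
  have q2 := congrArg (fun v => S.g v ζ) e2
  simp only [map_add, map_sub, map_neg, map_smul, LinearMap.add_apply, LinearMap.sub_apply,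
    LinearMap.neg_apply, LinearMap.smul_apply, smul_eq_mul] at q1 q2
  simp only [gz S.xi hxiT ζ hζ, gz X hXT ζ hζ, gz (S.phi X) hpXT ζ hζ, gz _ hφφT ζ hζ,
    gz S.xi hxiT (S.phi ζ) hpζ, gz X hXT (S.phi ζ) hpζ, gz (S.phi X) hpXT (S.phi ζ) hpζ,
    mul_zero, zero_mul, sub_zero, zero_sub, add_zero, zero_add, mul_one, neg_zero,
    neg_neg] at q1 q2
  rw [t0] at q1
  rw [t1, t2, t4] at q2
  rw [L3 X hXT X hXT ζ hζ, L3 (S.phi X) hpXT (S.phi X) hpXT ζ hζ]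
  linear_combination q2 - q1
end
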